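/- For any rooted binary phylogenetic tree T on a taxon set X evolving under the symmetric 4-state model N_4 (not necessarily ultrametric), P_α(X) ≥ P_β(X), i.e. P(MP(f,T) = {α} | ρ = α) ≥ P(MP(f,T) = {β} | ρ = α). -/

import Mathlib

/-- A rooted binary phylogenetic tree: a `leaf` is a single taxon, and the
root of `node p₁ p₂ L R` has the roots of `L` and `R` as its two children,
attached by edges carrying one-specific-change probabilities `p₁` and `p₂`. -/
inductive PhyloTree : Type
  | leaf : PhyloTree
  | node (p₁ p₂ : ℝ) (L R : PhyloTree) : PhyloTree

namespace PhyloTree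

/-- The number of leaves (taxa) of the tree. -/
def nLeaves : PhyloTree → ℕ
  | leaf => 1
  | node _ _ L R => nLeaves L + nLeaves R

/-- All edge substitution probabilities of the tree lie in `[0, 1/4]`. -/
def valid : PhyloTree → Prop
  | leaf => True
  | node p₁ p₂ L R => 0 ≤ p₁ ∧ p₁ ≤ 1/4 ∧ 0 ≤ p₂ ∧ p₂ ≤ 1/4 ∧ valid L ∧ valid R

end PhyloTree

/-- Transition probabilities of the symmetric 4-state model `N₄`: conditional
on the upper endpoint of an edge with substitution probability `q` being in
state `a`, the lower endpoint is in each specific state `b ≠ a` with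
probability `q`, and in state `a` with probability `1 - 3q`. -/
noncomputable def trans4 (q : ℝ) (a b : Fin 4) : ℝ := if a = b then 1 - 3*q else q

/-- `charProb4 t a f` is the probability, conditional on the root of `t`
being in state `a`, that the leaves of `t` (read from left to right) are in
the states recorded by the list `f`.  States evolve independently along the
edges according to `trans4`. -/
noncomputable def charProb4 : PhyloTree → Fin 4 → List (Fin 4) → ℝ
  | .leaf, a, f => if f = [a] then 1 else 0
  | .node p₁ p₂ L R, a, f =>
      ∑ b : Fin 4, ∑ c : Fin 4, trans4 p₁ a b * trans4 p₂ a c *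
        charProb4 L b (f.take L.nLeaves) * charProb4 R c (f.drop L.nLeaves)

/-- Fitch's parsimony operation: `A ∩ B` if it is nonempty, `A ∪ B` otherwise. -/
def fitchOp {k : ℕ} (A B : Finset (Fin k)) : Finset (Fin k) :=
  if (A ∩ B).Nonempty then A ∩ B else A ∪ B

/-- The set `MP(f,T)` assigned to the root of `t` by the Fitch algorithm when
the leaves carry the character (list of leaf states) `f`. -/
def fitchSet4 : PhyloTree → List (Fin 4) → Finset (Fin 4)
  | .leaf, [b] => {b}
  | .leaf, _ => ∅
  | .node _ _ L R, f =>
      fitchOp (fitchSet4 L (f.take L.nLeaves)) (fitchSet4 R (f.drop L.nLeaves))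

/-- `rootProb4 t a R = P(MP(f,T) = R ∣ root state = a)`. -/
noncomputable def rootProb4 (t : PhyloTree) (a : Fin 4) (R : Finset (Fin 4)) : ℝ :=
  ∑ f : Fin t.nLeaves → Fin 4,
    if fitchSet4 t (List.ofFn f) = R then charProb4 t a (List.ofFn f) else 0

/-- The reconstruction accuracy
`RA(X) = ∑_{R ⊆ A, α ∈ R} (1/|R|) · P(MP(f,T) = R ∣ ρ = α)`, with `α := 0`. -/
noncomputable def RA4 (t : PhyloTree) : ℝ :=
  ∑ R : Finset (Fin 4),
    if (0 : Fin 4) ∈ R then (R.card : ℝ)⁻¹ * rootProb4 t 0 R else 0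

/-- `ultra4 t p`: the tree `t` is ultrametric, and the probability of one
specific state change from the root to any leaf is `p` (under `N₄`, the
one-specific-change probabilities compose along a path as
`p₁ ∘ q₁ = p₁ + q₁ - 4·p₁·q₁`). -/
def ultra4 : PhyloTree → ℝ → Prop
  | .leaf, p => p = 0
  | .node p₁ p₂ L R, p => ∃ q₁ q₂, ultra4 L q₁ ∧ ultra4 R q₂ ∧
      p = p₁ + q₁ - 4*p₁*q₁ ∧ p = p₂ + q₂ - 4*p₂*q₂

-- ===== auxiliary =====

lemma trans4_nonneg {q : ℝ} (h0 : 0 ≤ q) (h1 : q ≤ 1/4) (a b : Fin 4) :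
    0 ≤ trans4 q a b := by
  unfold trans4; split <;> linarith

lemma charProb4_nonneg : ∀ (t : PhyloTree), t.valid → ∀ (a : Fin 4) (f : List (Fin 4)),
    0 ≤ charProb4 t a f
  | .leaf, _, a, f => by unfold charProb4; split <;> norm_num
  | .node p₁ p₂ L R, hv, a, f => by
    obtain ⟨h1, h2, h3, h4, hL, hR⟩ := hv
    unfold charProb4
    refine Finset.sum_nonneg fun b _ => Finset.sum_nonneg fun c _ => ?_
    have := charProb4_nonneg L hL b (f.take L.nLeaves)
    have := charProb4_nonneg R hR c (f.drop L.nLeaves)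
    have := trans4_nonneg h1 h2 a b
    have := trans4_nonneg h3 h4 a c
    positivity

lemma rootProb4_nonneg (t : PhyloTree) (hv : t.valid) (a : Fin 4) (A : Finset (Fin 4)) :
    0 ≤ rootProb4 t a A := by
  refine Finset.sum_nonneg fun f _ => ?_
  split
  · exact charProb4_nonneg t hv a _
  · exact le_refl 0

lemma trans4_perm (σ : Equiv.Perm (Fin 4)) (q : ℝ) (a b : Fin 4) :
    trans4 q (σ a) (σ b) = trans4 q a b := by
  simp [trans4, EmbeddingLike.apply_eq_iff_eq]

lemma charProb4_perm (σ : Equiv.Perm (Fin 4)) :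
    ∀ (t : PhyloTree) (a : Fin 4) (f : List (Fin 4)),
    charProb4 t (σ a) (f.map σ) = charProb4 t a f
  | .leaf, a, f => by
    unfold charProb4
    have : f.map σ = [σ a] ↔ f = [a] := by
      constructor
      · intro h
        have := congrArg (List.map σ.symm) h
        simpa using this
      · intro h; simp [h]
    split <;> split <;> first | rfl | (exfalso; tauto)
  | .node p₁ p₂ L R, a, f => by
    unfold charProb4
    rw [← Equiv.sum_comp σ (fun b => _)]
    congr 1; funext b
    rw [← Equiv.sum_comp σ (fun c => _)]
    congr 1; funext c
    rw [trans4_perm, trans4_perm, ← List.map_take, ← List.map_drop,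
      charProb4_perm σ L b, charProb4_perm σ R c]

lemma fitchOp_image (σ : Equiv.Perm (Fin 4)) (A B : Finset (Fin 4)) :
    fitchOp (A.image σ) (B.image σ) = (fitchOp A B).image σ := by
  unfold fitchOp
  rw [← Finset.image_inter _ _ σ.injective]
  by_cases h : (A ∩ B).Nonempty
  · simp [h, Finset.image_nonempty]
  · simp [h, Finset.image_nonempty, Finset.image_union]

lemma fitchSet4_perm (σ : Equiv.Perm (Fin 4)) :
    ∀ (t : PhyloTree) (f : List (Fin 4)),
    fitchSet4 t (f.map σ) = (fitchSet4 t f).image σ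
  | .leaf, [] => by simp [fitchSet4]
  | .leaf, [b] => by simp [fitchSet4]
  | .leaf, (b :: c :: l) => by simp [fitchSet4]
  | .node p₁ p₂ L R, f => by
    unfold fitchSet4
    rw [← List.map_take, ← List.map_drop, fitchSet4_perm σ L, fitchSet4_perm σ R,
      fitchOp_image]

lemma rootProb4_perm (σ : Equiv.Perm (Fin 4)) (t : PhyloTree) (a : Fin 4)
    (A : Finset (Fin 4)) :
    rootProb4 t (σ a) (A.image σ) = rootProb4 t a A := by
  unfold rootProb4
  rw [← Equiv.sum_comp (Equiv.arrowCongr (Equiv.refl (Fin t.nLeaves)) σ) (fun f => _)]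
  congr 1; funext f
  have h1 : List.ofFn ((Equiv.arrowCongr (Equiv.refl (Fin t.nLeaves)) σ) f)
      = (List.ofFn f).map σ := by
    rw [List.map_ofFn]; rfl
  rw [h1, fitchSet4_perm, charProb4_perm]
  have : (fitchSet4 t (List.ofFn f)).image σ = A.image σ ↔ fitchSet4 t (List.ofFn f) = A :=
    ⟨fun h => Finset.image_injective σ.injective h, fun h => by rw [h]⟩
  split <;> split <;> first | rfl | (exfalso; tauto)

lemma image_swap_of_mem {a b : Fin 4} {A : Finset (Fin 4)} (ha : a ∈ A) (hb : b ∈ A) :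
    A.image (Equiv.swap a b) = A := by
  ext x
  simp only [Finset.mem_image]
  constructor
  · rintro ⟨y, hy, rfl⟩
    rcases eq_or_ne y a with rfl | h1
    · simpa [Equiv.swap_apply_left]
    rcases eq_or_ne y b with rfl | h2
    · simpa [Equiv.swap_apply_right]
    · rwa [Equiv.swap_apply_of_ne_of_ne h1 h2]
  · intro hx
    exact ⟨Equiv.swap a b x, by
      rcases eq_or_ne x a with rfl | h1
      · simpa [Equiv.swap_apply_left]
      rcases eq_or_ne x b with rfl | h2
      · simpa [Equiv.swap_apply_right]
      · rwa [Equiv.swap_apply_of_ne_of_ne h1 h2], Equiv.swap_apply_self _ _ _⟩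

lemma image_swap_of_not_mem {a b : Fin 4} {A : Finset (Fin 4)} (ha : a ∉ A) (hb : b ∉ A) :
    A.image (Equiv.swap a b) = A := by
  ext x
  simp only [Finset.mem_image]
  constructor
  · rintro ⟨y, hy, rfl⟩
    rw [Equiv.swap_apply_of_ne_of_ne (ne_of_mem_of_not_mem hy ha)
      (ne_of_mem_of_not_mem hy hb)]
    exact hy
  · intro hx
    refine ⟨x, hx, ?_⟩
    rw [Equiv.swap_apply_of_ne_of_ne (ne_of_mem_of_not_mem hx ha)
      (ne_of_mem_of_not_mem hx hb)]

lemma image_swap_swap (a b : Fin 4) (A : Finset (Fin 4)) :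
    (A.image (Equiv.swap a b)).image (Equiv.swap a b) = A := by
  rw [Finset.image_image]
  simp [Function.comp_def, Equiv.swap_apply_self]

lemma rootProb4_leaf (a : Fin 4) (A : Finset (Fin 4)) :
    rootProb4 .leaf a A = if A = {a} then 1 else 0 := by
  unfold rootProb4
  show (∑ f : Fin 1 → Fin 4,
      if fitchSet4 .leaf (List.ofFn f) = A then charProb4 .leaf a (List.ofFn f) else 0)
    = if A = {a} then 1 else 0
  rw [← Equiv.sum_comp (Equiv.funUnique (Fin 1) (Fin 4)).symm (fun f => _)]
  have hofn : ∀ x : Fin 4, List.ofFn ((Equiv.funUnique (Fin 1) (Fin 4)).symm x) = [x] := by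
    intro x; simp [List.ofFn_succ]
  have hterm : ∀ x : Fin 4,
      (if fitchSet4 .leaf (List.ofFn ((Equiv.funUnique (Fin 1) (Fin 4)).symm x)) = A
        then charProb4 .leaf a (List.ofFn ((Equiv.funUnique (Fin 1) (Fin 4)).symm x)) else 0)
      = if ({x} : Finset (Fin 4)) = A then (if x = a then (1:ℝ) else 0) else 0 := by
    intro x
    rw [hofn]
    show (if ({x} : Finset (Fin 4)) = A then (if [x] = [a] then (1:ℝ) else 0) else 0) = _
    simp
  rw [Finset.sum_congr rfl (fun x _ => hterm x), Finset.sum_eq_single a]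
  · simp [eq_comm]
  · intro x _ hx
    simp [hx]
  · simp

noncomputable def edgeE (t : PhyloTree) (p : ℝ) (a : Fin 4) (A : Finset (Fin 4)) : ℝ :=
  ∑ x : Fin 4, trans4 p a x * rootProb4 t x A

lemma sum_ite_const {ι : Type*} [Fintype ι] (P : Prop) [Decidable P] (v : ι → ℝ) :
    (∑ i : ι, if P then v i else 0) = if P then ∑ i : ι, v i else 0 := by
  split <;> simp

lemma edgeE_expand (t : PhyloTree) (p : ℝ) (a : Fin 4) (A : Finset (Fin 4)) :
    edgeE t p a A = ∑ g : Fin t.nLeaves → Fin 4,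
      if fitchSet4 t (List.ofFn g) = A then
        (∑ x : Fin 4, trans4 p a x * charProb4 t x (List.ofFn g)) else 0 := by
  unfold edgeE rootProb4
  simp only [Finset.mul_sum, mul_ite, mul_zero]
  rw [Finset.sum_comm]
  exact Finset.sum_congr rfl fun g _ => sum_ite_const _ _

lemma rootProb4_node (p₁ p₂ : ℝ) (L R : PhyloTree) (a : Fin 4) (S : Finset (Fin 4)) :
    rootProb4 (.node p₁ p₂ L R) a S =
      ∑ A : Finset (Fin 4), ∑ B : Finset (Fin 4),
        if fitchOp A B = S then edgeE L p₁ a A * edgeE R p₂ a B else 0 := by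
  -- abbreviations
  set m := L.nLeaves with hm
  set n := R.nLeaves with hn
  have key : ∀ (g : Fin m → Fin 4) (h : Fin n → Fin 4),
      (∑ A : Finset (Fin 4), ∑ B : Finset (Fin 4),
        if fitchOp A B = S then
          (if fitchSet4 L (List.ofFn g) = A then
              (∑ x : Fin 4, trans4 p₁ a x * charProb4 L x (List.ofFn g)) else 0) *
          (if fitchSet4 R (List.ofFn h) = B then
              (∑ x : Fin 4, trans4 p₂ a x * charProb4 R x (List.ofFn h)) else 0)
        else 0)
      = if fitchOp (fitchSet4 L (List.ofFn g)) (fitchSet4 R (List.ofFn h)) = S then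
          (∑ x : Fin 4, trans4 p₁ a x * charProb4 L x (List.ofFn g)) *
          (∑ x : Fin 4, trans4 p₂ a x * charProb4 R x (List.ofFn h)) else 0 := by
    intro g h
    rw [Finset.sum_eq_single (fitchSet4 L (List.ofFn g))]
    · rw [Finset.sum_eq_single (fitchSet4 R (List.ofFn h))]
      · simp
      · intro B _ hB
        simp [Ne.symm hB]
      · simp
    · intro A _ hA
      apply Finset.sum_eq_zero
      intro B _
      simp [Ne.symm hA]
    · simp
  have swap4 : ∀ (F : Finset (Fin 4) → Finset (Fin 4) → (Fin m → Fin 4) → (Fin n → Fin 4) → ℝ),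
      (∑ A : Finset (Fin 4), ∑ B : Finset (Fin 4), ∑ g : Fin m → Fin 4,
        ∑ h : Fin n → Fin 4, F A B g h)
      = ∑ g : Fin m → Fin 4, ∑ h : Fin n → Fin 4, ∑ A : Finset (Fin 4),
          ∑ B : Finset (Fin 4), F A B g h := by
    intro F
    calc (∑ A : Finset (Fin 4), ∑ B : Finset (Fin 4), ∑ g : Fin m → Fin 4,
            ∑ h : Fin n → Fin 4, F A B g h)
        = ∑ A : Finset (Fin 4), ∑ g : Fin m → Fin 4, ∑ B : Finset (Fin 4),
            ∑ h : Fin n → Fin 4, F A B g h :=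
          Finset.sum_congr rfl fun A _ => Finset.sum_comm
      _ = ∑ g : Fin m → Fin 4, ∑ A : Finset (Fin 4), ∑ B : Finset (Fin 4),
            ∑ h : Fin n → Fin 4, F A B g h := Finset.sum_comm
      _ = ∑ g : Fin m → Fin 4, ∑ A : Finset (Fin 4), ∑ h : Fin n → Fin 4,
            ∑ B : Finset (Fin 4), F A B g h :=
          Finset.sum_congr rfl fun g _ => Finset.sum_congr rfl fun A _ => Finset.sum_comm
      _ = ∑ g : Fin m → Fin 4, ∑ h : Fin n → Fin 4, ∑ A : Finset (Fin 4),
            ∑ B : Finset (Fin 4), F A B g h :=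
          Finset.sum_congr rfl fun g _ => Finset.sum_comm
  have step1 : ∀ A B : Finset (Fin 4),
      (if fitchOp A B = S then edgeE L p₁ a A * edgeE R p₂ a B else 0)
      = ∑ g : Fin m → Fin 4, ∑ h : Fin n → Fin 4,
          if fitchOp A B = S then
            (if fitchSet4 L (List.ofFn g) = A then
                (∑ x : Fin 4, trans4 p₁ a x * charProb4 L x (List.ofFn g)) else 0) *
            (if fitchSet4 R (List.ofFn h) = B then
                (∑ x : Fin 4, trans4 p₂ a x * charProb4 R x (List.ofFn h)) else 0)
          else 0 := by
    intro A B
    by_cases hP : fitchOp A B = S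
    · rw [if_pos hP, edgeE_expand, edgeE_expand, Finset.sum_mul_sum]
      exact Finset.sum_congr rfl fun g _ => Finset.sum_congr rfl fun h _ => (if_pos hP).symm
    · rw [if_neg hP]
      exact (Finset.sum_eq_zero fun g _ => Finset.sum_eq_zero fun h _ => if_neg hP).symm
  -- RHS transformation  -- RHS transformation  -- RHS transformation
  have rhs_eq : (∑ A : Finset (Fin 4), ∑ B : Finset (Fin 4),
        if fitchOp A B = S then edgeE L p₁ a A * edgeE R p₂ a B else 0)
      = ∑ g : Fin m → Fin 4, ∑ h : Fin n → Fin 4,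
          if fitchOp (fitchSet4 L (List.ofFn g)) (fitchSet4 R (List.ofFn h)) = S then
            (∑ x : Fin 4, trans4 p₁ a x * charProb4 L x (List.ofFn g)) *
            (∑ x : Fin 4, trans4 p₂ a x * charProb4 R x (List.ofFn h)) else 0 := by
    calc (∑ A : Finset (Fin 4), ∑ B : Finset (Fin 4),
            if fitchOp A B = S then edgeE L p₁ a A * edgeE R p₂ a B else 0)
        = ∑ A : Finset (Fin 4), ∑ B : Finset (Fin 4), ∑ g : Fin m → Fin 4,
            ∑ h : Fin n → Fin 4,
            if fitchOp A B = S then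
              (if fitchSet4 L (List.ofFn g) = A then
                  (∑ x : Fin 4, trans4 p₁ a x * charProb4 L x (List.ofFn g)) else 0) *
              (if fitchSet4 R (List.ofFn h) = B then
                  (∑ x : Fin 4, trans4 p₂ a x * charProb4 R x (List.ofFn h)) else 0)
            else 0 :=
          Finset.sum_congr rfl fun A _ => Finset.sum_congr rfl fun B _ => step1 A B
      _ = ∑ g : Fin m → Fin 4, ∑ h : Fin n → Fin 4, ∑ A : Finset (Fin 4),
            ∑ B : Finset (Fin 4),
            if fitchOp A B = S then
              (if fitchSet4 L (List.ofFn g) = A then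
                  (∑ x : Fin 4, trans4 p₁ a x * charProb4 L x (List.ofFn g)) else 0) *
              (if fitchSet4 R (List.ofFn h) = B then
                  (∑ x : Fin 4, trans4 p₂ a x * charProb4 R x (List.ofFn h)) else 0)
            else 0 := swap4 _
      _ = ∑ g : Fin m → Fin 4, ∑ h : Fin n → Fin 4,
            if fitchOp (fitchSet4 L (List.ofFn g)) (fitchSet4 R (List.ofFn h)) = S then
              (∑ x : Fin 4, trans4 p₁ a x * charProb4 L x (List.ofFn g)) *
              (∑ x : Fin 4, trans4 p₂ a x * charProb4 R x (List.ofFn h)) else 0 :=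
          Finset.sum_congr rfl fun g _ => Finset.sum_congr rfl fun h _ => key g h
  -- LHS transformation
  rw [rhs_eq]
  unfold rootProb4
  show (∑ f : Fin (m + n) → Fin 4,
      if fitchSet4 (.node p₁ p₂ L R) (List.ofFn f) = S then
        charProb4 (.node p₁ p₂ L R) a (List.ofFn f) else 0) = _
  rw [← Equiv.sum_comp ((Equiv.sumArrowEquivProdArrow (Fin m) (Fin n) (Fin 4)).symm.trans
      (Equiv.arrowCongr finSumFinEquiv (Equiv.refl (Fin 4)))) (fun f => _)]
  rw [Fintype.sum_prod_type]
  refine Finset.sum_congr rfl fun g _ => Finset.sum_congr rfl fun h _ => ?_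
  have happend : List.ofFn ((Equiv.sumArrowEquivProdArrow (Fin m) (Fin n) (Fin 4)).symm.trans
        (Equiv.arrowCongr finSumFinEquiv (Equiv.refl (Fin 4))) (g, h))
      = List.ofFn g ++ List.ofFn h := by
    rw [List.ofFn_add]
    congr 1
    · apply congrArg List.ofFn
      funext i
      simp [Equiv.sumArrowEquivProdArrow, Equiv.arrowCongr]
      exact congrArg (Sum.elim g h) (finSumFinEquiv_symm_apply_castAdd i)
    · apply congrArg List.ofFn
      funext i
      simp [Equiv.sumArrowEquivProdArrow, Equiv.arrowCongr]
  rw [happend]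
  have htake : (List.ofFn g ++ List.ofFn h).take L.nLeaves = List.ofFn g :=
    List.take_left' (by rw [List.length_ofFn])
  have hdrop : (List.ofFn g ++ List.ofFn h).drop L.nLeaves = List.ofFn h :=
    List.drop_left' (by rw [List.length_ofFn])
  show (if fitchOp (fitchSet4 L ((List.ofFn g ++ List.ofFn h).take L.nLeaves))
          (fitchSet4 R ((List.ofFn g ++ List.ofFn h).drop L.nLeaves)) = S then
        (∑ b : Fin 4, ∑ c : Fin 4, trans4 p₁ a b * trans4 p₂ a c *
          charProb4 L b ((List.ofFn g ++ List.ofFn h).take L.nLeaves) *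
          charProb4 R c ((List.ofFn g ++ List.ofFn h).drop L.nLeaves)) else 0) = _
  rw [htake, hdrop]
  by_cases hP : fitchOp (fitchSet4 L (List.ofFn g)) (fitchSet4 R (List.ofFn h)) = S
  · rw [if_pos hP, if_pos hP, Finset.sum_mul_sum]
    refine Finset.sum_congr rfl fun b _ => Finset.sum_congr rfl fun c _ => ?_
    ring
  · rw [if_neg hP, if_neg hP]

def TreeInv (t : PhyloTree) : Prop :=
  ∀ (a b : Fin 4) (A : Finset (Fin 4)), a ∈ A → b ∉ A →
    rootProb4 t a (A.image (Equiv.swap a b)) ≤ rootProb4 t a A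

lemma edgeE_nonneg (t : PhyloTree) (hv : t.valid) {p : ℝ} (h0 : 0 ≤ p) (h1 : p ≤ 1/4)
    (a : Fin 4) (A : Finset (Fin 4)) : 0 ≤ edgeE t p a A :=
  Finset.sum_nonneg fun x _ =>
    mul_nonneg (trans4_nonneg h0 h1 a x) (rootProb4_nonneg t hv x A)

lemma edgeE_swap_le (t : PhyloTree) (hv : t.valid) (hInv : TreeInv t) {p : ℝ}
    (h0 : 0 ≤ p) (h1 : p ≤ 1/4) {a b : Fin 4} {A : Finset (Fin 4)}
    (ha : a ∈ A) (hb : b ∉ A) :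
    edgeE t p a (A.image (Equiv.swap a b)) ≤ edgeE t p a A := by
  have hab : a ≠ b := fun h => hb (h ▸ ha)
  have hsym : ∀ x : Fin 4, rootProb4 t x (A.image (Equiv.swap a b))
      = rootProb4 t (Equiv.swap a b x) A := by
    intro x
    rw [← rootProb4_perm (Equiv.swap a b) t x (A.image (Equiv.swap a b)), image_swap_swap]
  unfold edgeE
  simp only [hsym]
  have hre : (∑ x : Fin 4, trans4 p a x * rootProb4 t (Equiv.swap a b x) A)
      = ∑ x : Fin 4, trans4 p a (Equiv.swap a b x) * rootProb4 t x A := by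
    rw [← Equiv.sum_comp (Equiv.swap a b)
      (fun y => trans4 p a (Equiv.swap a b y) * rootProb4 t y A)]
    simp [Equiv.swap_apply_self]
  rw [hre, ← sub_nonneg, ← Finset.sum_sub_distrib]
  have hzero : ∀ x ∈ (Finset.univ : Finset (Fin 4)), x ∉ ({a, b} : Finset (Fin 4)) →
      trans4 p a x * rootProb4 t x A - trans4 p a (Equiv.swap a b x) * rootProb4 t x A
        = 0 := by
    intro x _ hx
    simp only [Finset.mem_insert, Finset.mem_singleton] at hx
    push_neg at hx
    rw [Equiv.swap_apply_of_ne_of_ne hx.1 hx.2, sub_self]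
  rw [← Finset.sum_subset (Finset.subset_univ ({a, b} : Finset (Fin 4))) hzero,
    Finset.sum_pair hab]
  rw [Equiv.swap_apply_left, Equiv.swap_apply_right]
  have e1 : trans4 p a a = 1 - 3*p := if_pos rfl
  have e2 : trans4 p a b = p := if_neg hab
  rw [e1, e2]
  have hqb : rootProb4 t b A = rootProb4 t a (A.image (Equiv.swap a b)) := by
    rw [hsym a, Equiv.swap_apply_left]
  have hq : rootProb4 t b A ≤ rootProb4 t a A := by
    rw [hqb]; exact hInv a b A ha hb
  nlinarith [hq]

lemma inv_of_valid : ∀ t : PhyloTree, t.valid → TreeInv t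
  | .leaf, _ => by
    intro a b A ha hb
    have hab : a ≠ b := fun h => hb (h ▸ ha)
    rw [rootProb4_leaf, rootProb4_leaf]
    have hA : A.image (Equiv.swap a b) ≠ {a} := by
      intro h
      have h2 : A = ({a} : Finset (Fin 4)).image (Equiv.swap a b) := by
        rw [← h, image_swap_swap]
      rw [Finset.image_singleton, Equiv.swap_apply_left] at h2
      rw [h2, Finset.mem_singleton] at ha
      exact hab ha
    rw [if_neg hA]
    split <;> norm_num
  | .node p₁ p₂ L R, hv => by
    obtain ⟨h1, h2, h3, h4, hL, hR⟩ := hv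
    have IL := inv_of_valid L hL
    have IR := inv_of_valid R hR
    intro a b A ha hb
    have hab : a ≠ b := fun h => hb (h ▸ ha)
    rw [rootProb4_node, rootProb4_node]
    have reidx : (∑ A' : Finset (Fin 4), ∑ B' : Finset (Fin 4),
          if fitchOp A' B' = A.image (Equiv.swap a b) then
            edgeE L p₁ a A' * edgeE R p₂ a B' else 0)
        = ∑ A' : Finset (Fin 4), ∑ B' : Finset (Fin 4),
          if fitchOp A' B' = A then
            edgeE L p₁ a (A'.image (Equiv.swap a b)) *
            edgeE R p₂ a (B'.image (Equiv.swap a b)) else 0 := by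
      rw [← Equiv.sum_comp (Equiv.finsetCongr (Equiv.swap a b)) (fun A' => _)]
      refine Finset.sum_congr rfl fun A' _ => ?_
      rw [← Equiv.sum_comp (Equiv.finsetCongr (Equiv.swap a b)) (fun B' => _)]
      refine Finset.sum_congr rfl fun B' _ => ?_
      simp only [Equiv.finsetCongr_apply, Finset.map_eq_image, Equiv.coe_toEmbedding]
      rw [fitchOp_image]
      have : (fitchOp A' B').image (Equiv.swap a b) = A.image (Equiv.swap a b)
          ↔ fitchOp A' B' = A :=
        ⟨fun h => Finset.image_injective (Equiv.swap a b).injective h, fun h => by rw [h]⟩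
      split <;> split <;> first | rfl | (exfalso; tauto)
    rw [reidx]
    refine Finset.sum_le_sum fun A' _ => Finset.sum_le_sum fun B' _ => ?_
    by_cases hfit : fitchOp A' B' = A
    · rw [if_pos hfit, if_pos hfit]
      unfold fitchOp at hfit
      by_cases hne : (A' ∩ B').Nonempty
      · rw [if_pos hne] at hfit
        subst hfit
        have haA : a ∈ A' := (Finset.mem_inter.mp ha).1
        have haB : a ∈ B' := (Finset.mem_inter.mp ha).2
        by_cases hbA : b ∈ A'
        · have hbB : b ∉ B' := fun hB => hb (Finset.mem_inter.mpr ⟨hbA, hB⟩)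
          rw [image_swap_of_mem haA hbA]
          exact mul_le_mul_of_nonneg_left
            (edgeE_swap_le R hR IR h3 h4 haB hbB) (edgeE_nonneg L hL h1 h2 a A')
        · by_cases hbB : b ∈ B'
          · rw [image_swap_of_mem haB hbB]
            exact mul_le_mul_of_nonneg_right
              (edgeE_swap_le L hL IL h1 h2 haA hbA) (edgeE_nonneg R hR h3 h4 a B')
          · exact mul_le_mul (edgeE_swap_le L hL IL h1 h2 haA hbA)
              (edgeE_swap_le R hR IR h3 h4 haB hbB)
              (edgeE_nonneg R hR h3 h4 a _) (edgeE_nonneg L hL h1 h2 a A')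
      · rw [if_neg hne] at hfit
        subst hfit
        have hbA : b ∉ A' := fun h => hb (Finset.mem_union_left _ h)
        have hbB : b ∉ B' := fun h => hb (Finset.mem_union_right _ h)
        rcases Finset.mem_union.mp ha with haA | haB
        · have haB : a ∉ B' := fun h => hne ⟨a, Finset.mem_inter.mpr ⟨haA, h⟩⟩
          rw [image_swap_of_not_mem haB hbB]
          exact mul_le_mul_of_nonneg_right
            (edgeE_swap_le L hL IL h1 h2 haA hbA) (edgeE_nonneg R hR h3 h4 a B')
        · have haA : a ∉ A' := fun h => hne ⟨a, Finset.mem_inter.mpr ⟨h, haB⟩⟩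
          rw [image_swap_of_not_mem haA hbA]
          exact mul_le_mul_of_nonneg_left
            (edgeE_swap_le R hR IR h3 h4 haB hbB) (edgeE_nonneg L hL h1 h2 a A')
    · rw [if_neg hfit, if_neg hfit]


/-- For any rooted binary phylogenetic tree under `N₄` (not
necessarily ultrametric), `P_α(X) ≥ P_β(X)`. -/
theorem rootProb4_alpha_ge_beta (t : PhyloTree) (hn : 2 ≤ t.nLeaves)
    (hv : t.valid) :
    rootProb4 t 0 {0} ≥ rootProb4 t 0 {1} := by
  have h := inv_of_valid t hv 0 1 {0} (Finset.mem_singleton_self 0) (by decide)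
  have himg : ({0} : Finset (Fin 4)).image (Equiv.swap 0 1) = {1} := by
    rw [Finset.image_singleton, Equiv.swap_apply_left]
  rw [himg] at h
  exact h
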